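/- Suppose G is a simple graph (μ takes values in {0,1}) that is a tree on the vertex set V = {1,…,n+1}. Then M_G = ⟨x_1, x_2, …, x_n⟩, the maximal monomial ideal generated by the variables of k[x_1,…,x_n]. -/

import Mathlib

open Finset

/-- The vertex-induced subgraph on `S` of the multigraph with edge-multiplicity
function `μ` is connected: any two vertices of `S` are joined by a walk inside `S`. -/
def ConnectedOn {n : ℕ} (μ : Fin (n + 1) → Fin (n + 1) → ℕ) (S : Set (Fin (n + 1))) : Prop :=
  ∀ i ∈ S, ∀ j ∈ S, Relation.ReflTransGen (fun a b => a ∈ S ∧ b ∈ S ∧ 1 ≤ μ a b) i j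

/-- The affine subspace `U = { x ∈ ℝ^{n+1} : x_{n+1} = 0, x_1 + ⋯ + x_n = 1 }`. -/
def U (n : ℕ) : Set (Fin (n + 1) → ℝ) :=
  {x | x (Fin.last n) = 0 ∧ ∑ i : Fin n, x i.castSucc = 1}

/-- The open cell of `p` in the restriction of the graphical arrangement of `μ` to `U`. -/
def openCell {n : ℕ} (μ : Fin (n + 1) → Fin (n + 1) → ℕ) (p : Fin (n + 1) → ℝ) :
    Set (Fin (n + 1) → ℝ) :=
  {q | q ∈ U n ∧ ∀ i j, 1 ≤ μ i j →
    ((q i < q j ↔ p i < p j) ∧ (q i = q j ↔ p i = p j))}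

/-- The closed cell of `p` in the restriction of the graphical arrangement of `μ` to `U`. -/
def closedCell {n : ℕ} (μ : Fin (n + 1) → Fin (n + 1) → ℕ) (p : Fin (n + 1) → ℝ) :
    Set (Fin (n + 1) → ℝ) :=
  {q | q ∈ U n ∧ ∀ i j, 1 ≤ μ i j →
    ((p i < p j → q i ≤ q j) ∧ (p i = p j → q i = q j))}

/-- `p`-equivalence: `i ∼_p j` iff there is a path in the graph along which `p` is constant. -/
def pEquiv {n : ℕ} (μ : Fin (n + 1) → Fin (n + 1) → ℕ) (p : Fin (n + 1) → ℝ)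
    (i j : Fin (n + 1)) : Prop :=
  Relation.ReflTransGen (fun a b => 1 ≤ μ a b ∧ p a = p b) i j

/-- `d_I(i)`: the number of edges from vertex `i` to the complement of `I`. -/
def dI {n : ℕ} (μ : Fin (n + 1) → Fin (n + 1) → ℕ) (I : Finset (Fin (n + 1)))
    (i : Fin (n + 1)) : ℕ :=
  ∑ j ∈ Iᶜ, μ i j

/-- `ε_I(i) = d_I(i)` for `i ∈ I` and `0` otherwise. -/
def epsI {n : ℕ} (μ : Fin (n + 1) → Fin (n + 1) → ℕ) (I : Finset (Fin (n + 1)))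
    (i : Fin (n + 1)) : ℕ :=
  if i ∈ I then dI μ I i else 0

/-- The point `(1/|I|) · e_I`, where `e_I` is the 0/1 indicator vector of `I`. -/
noncomputable def qI {n : ℕ} (I : Finset (Fin (n + 1))) : Fin (n + 1) → ℝ :=
  fun i => if i ∈ I then 1 / (I.card : ℝ) else 0

/-- `D_i(p)`: the number of edges `ij` with `p_i > p_j`. -/
noncomputable def Dlab {n : ℕ} (μ : Fin (n + 1) → Fin (n + 1) → ℕ) (p : Fin (n + 1) → ℝ) (i : Fin n) : ℕ :=
  ∑ j ∈ Finset.univ.filter (fun j => p j < p i.castSucc), μ i.castSucc j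

/-- The monomial `m_I = ∏_{i ∈ [n]} x_i^{ε_I(i)}`. -/
noncomputable def mI {n : ℕ} (k : Type*) [Field k] (μ : Fin (n + 1) → Fin (n + 1) → ℕ)
    (I : Finset (Fin (n + 1))) : MvPolynomial (Fin n) k :=
  ∏ i : Fin n, MvPolynomial.X i ^ epsI μ I i.castSucc

/-- The monomial ideal `M_G = ⟨ m_I : ∅ ≠ I ⊆ [n] ⟩`. -/
noncomputable def MG {n : ℕ} (k : Type*) [Field k] (μ : Fin (n + 1) → Fin (n + 1) → ℕ) :
    Ideal (MvPolynomial (Fin n) k) :=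
  Ideal.span {f | ∃ I : Finset (Fin (n + 1)), I.Nonempty ∧ Fin.last n ∉ I ∧ f = mI k μ I}


lemma crossing {α : Type*} {R : α → α → Prop} {S : Set α} {x y : α}
    (h : Relation.ReflTransGen R x y) (hx : x ∈ S) (hy : y ∉ S) :
    ∃ a b, a ∈ S ∧ b ∉ S ∧ R a b := by
  revert hy
  induction h with
  | refl => exact fun hy => absurd hx hy
  | @tail b c hxb hbc ih =>
    intro hy
    by_cases hb : b ∈ S
    · exact ⟨b, c, hb, hy, hbc⟩
    · exact ih hb

/-- if `G` is a simple tree on `{1, …, n+1}` then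
`M_G = ⟨x_1, …, x_n⟩`. -/
theorem stmt7 {n : ℕ} (hn : 1 ≤ n) (k : Type*) [Field k]
    (μ : Fin (n + 1) → Fin (n + 1) → ℕ)
    (hsym : ∀ i j, μ i j = μ j i) (hloop : ∀ i, μ i i = 0)
    (hsimple : ∀ i j, μ i j ≤ 1)
    (G' : SimpleGraph (Fin (n + 1))) (hG' : ∀ i j, G'.Adj i j ↔ 1 ≤ μ i j)
    (htree : G'.IsTree) :
    MG k μ = Ideal.span (Set.range (MvPolynomial.X : Fin n → MvPolynomial (Fin n) k)) := by

  classical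
  apply le_antisymm
  · -- `MG ⊆ ⟨x_1, …, x_n⟩`
    rw [MG, Ideal.span_le]
    rintro f ⟨I, hI, hlast, rfl⟩
    obtain ⟨w, hw⟩ := hI
    have hreach : G'.Reachable w (Fin.last n) := htree.isConnected.preconnected w _
    rw [SimpleGraph.reachable_iff_reflTransGen] at hreach
    obtain ⟨a, b, ha, hb, hab⟩ := crossing (S := (↑I : Set (Fin (n+1)))) hreach hw
      (by simpa using hlast)
    simp only [Finset.coe_mem, Finset.mem_coe] at ha hb
    have hane : a ≠ Fin.last n := fun h => hlast (h ▸ ha)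
    obtain ⟨i, rfl⟩ := Fin.exists_castSucc_eq.mpr hane
    have heps : 1 ≤ epsI μ I i.castSucc := by
      rw [epsI, if_pos ha, dI]
      calc 1 ≤ μ i.castSucc b := (hG' _ _).mp hab
      _ ≤ ∑ j ∈ Iᶜ, μ i.castSucc j :=
        Finset.single_le_sum (fun j _ => Nat.zero_le _) (Finset.mem_compl.mpr hb)
    have hdvd : MvPolynomial.X i ∣ mI k μ I := by
      refine dvd_trans (dvd_pow_self _ (Nat.one_le_iff_ne_zero.mp heps)) ?_
      exact Finset.dvd_prod_of_mem
        (fun j => (MvPolynomial.X j : MvPolynomial (Fin n) k) ^ epsI μ I j.castSucc)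
        (Finset.mem_univ i)
    obtain ⟨c, hc⟩ := hdvd
    rw [hc]
    exact Ideal.mul_mem_right c _ (Ideal.subset_span (Set.mem_range_self i))
  · -- `⟨x_1, …, x_n⟩ ⊆ MG`
    rw [Ideal.span_le]
    rintro f ⟨i, rfl⟩
    set a := i.castSucc with haa
    set t := Fin.last n with hta
    have hat : a ≠ t := (Fin.castSucc_lt_last i).ne
    obtain ⟨p0⟩ := htree.isConnected.preconnected a t
    obtain ⟨P, hP⟩ := p0.toPath
    obtain ⟨v, h, q, rfl⟩ := SimpleGraph.Walk.exists_eq_cons_of_ne hat P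
    · rw [SimpleGraph.Walk.cons_isPath_iff] at hP
      obtain ⟨hq, haq⟩ := hP
      set G'' := G' \ SimpleGraph.fromEdgeSet {s(a, v)} with hG''
      have hbr : ¬ G''.Reachable a v :=
        ((SimpleGraph.isAcyclic_iff_forall_adj_isBridge.mp htree.IsAcyclic h))
      have hq' : ∀ e ∈ q.edges, e ∈ G''.edgeSet := by
        intro e he
        have h1 : e ∈ G'.edgeSet := q.edges_subset_edgeSet he
        have h2 : e ≠ s(a, v) := by
          intro hev
          exact haq (q.fst_mem_support_of_mem_edges (hev ▸ he))
        rw [hG'']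
        simp only [SimpleGraph.edgeSet_sdiff, SimpleGraph.edgeSet_fromEdgeSet,
          Set.mem_diff, Set.mem_diff, Set.mem_singleton_iff]
        exact ⟨h1, fun hh => h2 hh.1⟩
      have hvt : G''.Reachable v t := ⟨q.transfer G'' hq'⟩
      set I : Finset (Fin (n+1)) := Finset.univ.filter (fun w => G''.Reachable a w) with hI
      have haI : a ∈ I := Finset.mem_filter.mpr ⟨Finset.mem_univ a, SimpleGraph.Reachable.refl a⟩
      have hvI : v ∉ I := by simp only [hI, Finset.mem_filter]; exact fun hh => hbr hh.2
      have htI : t ∉ I := by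
        simp only [hI, Finset.mem_filter]
        rintro ⟨-, hh⟩
        exact hbr (hh.trans hvt.symm)
      have hedge : ∀ w ∈ I, ∀ u, u ∉ I → 1 ≤ μ w u → w = a ∧ u = v := by
        intro w hwI u huI hmu
        have hadj : G'.Adj w u := (hG' _ _).mpr hmu
        by_cases hev : s(w, u) = s(a, v)
        · rw [Sym2.eq_iff] at hev
          rcases hev with ⟨h1, h2⟩ | ⟨h1, h2⟩
          · exact ⟨h1, h2⟩
          · exact absurd (h1 ▸ hwI) hvI
        · exfalso
          have hadj'' : G''.Adj w u := by
            rw [hG'']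
            simp only [SimpleGraph.sdiff_adj, SimpleGraph.fromEdgeSet_adj,
              Set.mem_singleton_iff]
            exact ⟨hadj, fun hh => hev hh.1⟩
          apply huI
          simp only [hI, Finset.mem_filter] at hwI ⊢
          exact ⟨Finset.mem_univ u, hwI.2.trans hadj''.reachable⟩
      have hepsa : epsI μ I a = 1 := by
        rw [epsI, if_pos haI, dI]
        rw [Finset.sum_eq_single_of_mem v (Finset.mem_compl.mpr hvI)]
        · exact le_antisymm (hsimple _ _) ((hG' _ _).mp h)
        · intro u hu hne
          by_contra hmu
          have : 1 ≤ μ a u := Nat.one_le_iff_ne_zero.mpr hmu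
          exact hne (hedge a haI u (Finset.mem_compl.mp hu) this).2
      have hepsj : ∀ j : Fin n, j ≠ i → epsI μ I j.castSucc = 0 := by
        intro j hj
        rw [epsI]
        split_ifs with hjI
        · rw [dI]
          apply Finset.sum_eq_zero
          intro u hu
          by_contra hmu
          have h1 : 1 ≤ μ j.castSucc u := Nat.one_le_iff_ne_zero.mpr hmu
          have := (hedge j.castSucc hjI u (Finset.mem_compl.mp hu) h1).1
          exact hj (Fin.castSucc_injective n (this.trans haa))
        · rfl
      have hmI : mI k μ I = MvPolynomial.X i := by
        rw [mI, Finset.prod_eq_single i]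
        · rw [hepsa, pow_one]
        · intro j _ hj
          rw [hepsj j hj, pow_zero]
        · exact fun hh => absurd (Finset.mem_univ i) hh
      rw [← hmI]
      exact Ideal.subset_span ⟨I, ⟨a, haI⟩, htI, rfl⟩
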